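/- Let b be a regular symmetric or alternate bilinear form on a finite-dimensional vector space V over a field K with b(u(x),u(y)) = b(x,y) for all x,y, where u ∈ GL(V) and u − id is nilpotent. Then for every positive integer k, Ker(u − id)^k is the b-orthogonal complement of Im(u − id)^k. -/

import Mathlib

theorem ker_eq_orthogonal_range_pow {K V : Type*} [Field K]
    [AddCommGroup V] [Module K V] [FiniteDimensional K V]
    (B : V →ₗ[K] V →ₗ[K] K)
    (hreg : B.Nondegenerate)
    (hsa : (∀ x y, B x y = B y x) ∨ (∀ x, B x x = 0))
    (u : V ≃ₗ[K] V)
    (hiso : ∀ x y, B (u x) (u y) = B x y)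
    (hnil : IsNilpotent ((u : V →ₗ[K] V) - LinearMap.id)) :
    ∀ k : ℕ, 0 < k → ∀ x : V,
      x ∈ LinearMap.ker (((u : V →ₗ[K] V) - LinearMap.id) ^ k) ↔
        ∀ y : V, B x (((((u : V →ₗ[K] V) - LinearMap.id) ^ k : V →ₗ[K] V)) y) = 0 := by
  set U : V →ₗ[K] V := (u : V →ₗ[K] V) with hU
  set Ui : V →ₗ[K] V := (u.symm : V →ₗ[K] V) with hUi
  set N : V →ₗ[K] V := U - LinearMap.id with hN
  set M : V →ₗ[K] V := Ui - LinearMap.id with hM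
  have hUUi : U * Ui = 1 := by
    ext v; simp [hU, hUi, Module.End.mul_apply]
  have hUiU : Ui * U = 1 := by
    ext v; simp [hU, hUi, Module.End.mul_apply]
  have hcomm : Ui * N = N * Ui := by
    ext v
    simp [hN, hU, hUi, Module.End.mul_apply, map_sub]
  have hMeq : M = (-Ui) * N := by
    ext v
    simp [hM, hN, hU, hUi, Module.End.mul_apply, map_sub]
  have hcomm' : Commute (-Ui) N := (Commute.neg_left hcomm)
  have hMk : ∀ k : ℕ, M ^ k = (-Ui) ^ k * N ^ k := by
    intro k
    rw [hMeq, hcomm'.mul_pow]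
  have hInj : ∀ k : ℕ, Function.Injective ((-Ui) ^ k : V →ₗ[K] V) := by
    intro k
    have h1 : Function.Injective (-Ui : V →ₗ[K] V) := by
      intro a b hab
      have : u.symm a = u.symm b := by
        have := congrArg Neg.neg hab
        simpa [hUi] using this
      exact u.symm.injective this
    rw [Module.End.coe_pow]
    exact Function.Injective.iterate h1 k
  have key : ∀ x y, B x (N y) = B (M x) y := by
    intro x y
    have h1 : B x (u y) = B (u.symm x) y := by
      conv_lhs => rw [← u.apply_symm_apply x]
      rw [hiso]
    simp only [hN, hM, LinearMap.sub_apply, LinearMap.id_apply, map_sub,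
      LinearMap.sub_apply]
    rw [hU, hUi]
    simp only [LinearEquiv.coe_coe, h1]
  have keyk : ∀ k : ℕ, ∀ x y, B x ((N ^ k) y) = B ((M ^ k) x) y := by
    intro k
    induction k with
    | zero => simp
    | succ n ih =>
      intro x y
      rw [pow_succ', Module.End.mul_apply, key, ih, pow_succ, Module.End.mul_apply]
  intro k hk x
  constructor
  · intro hx y
    rw [keyk k x y]
    have hx0 : (N ^ k) x = 0 := LinearMap.mem_ker.mp hx
    have : (M ^ k) x = 0 := by
      rw [hMk, Module.End.mul_apply, hx0, map_zero]
    rw [this]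
    simp
  · intro h
    have hM0 : (M ^ k) x = 0 := by
      apply hreg.1
      intro y
      rw [← keyk]
      exact h y
    have : ((-Ui) ^ k) ((N ^ k) x) = 0 := by
      rw [← Module.End.mul_apply, ← hMk, hM0]
    have := hInj k (by rw [this, map_zero] : ((-Ui) ^ k) ((N ^ k) x) = ((-Ui) ^ k) 0)
    exact this
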